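/- arXiv:math/0403081 — 2 statements merged into one kernel-verified Lean document; each statement's English description precedes it below -/
import Mathlib

section
/- In any recollement situation, for every short exact sequence 0 → X → Y → Z → 0 in A'', there is an exact sequence in A': i^!j_!(X) → i^!j_!(Y) → i^!j_!(Z) → i*j_*(X) → i*j_*(Y) → i*j_*(Z). -/
open CategoryTheory Limits

universe v u v' u' v'' u''

/-- A recollement situation of abelian categories `A'`, `A`, `A''`. -/
structure Recollement (A' : Type u') (A : Type u) (A'' : Type u'')
    [Category.{v'} A'] [Category.{v} A] [Category.{v''} A'']
    [Abelian A'] [Abelian A] [Abelian A''] where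
  /-- the functor `i^* : A → A'` -/
  iStar : A ⥤ A'
  /-- the functor `i_* : A' → A` -/
  iLower : A' ⥤ A
  /-- the functor `i^! : A → A'` -/
  iShriek : A ⥤ A'
  /-- the functor `j_! : A'' → A` -/
  jShriek : A'' ⥤ A
  /-- the functor `j^* : A → A''` -/
  jStar : A ⥤ A''
  /-- the functor `j_* : A'' → A` -/
  jLower : A'' ⥤ A
  iStar_additive : iStar.Additive
  iLower_additive : iLower.Additive
  iShriek_additive : iShriek.Additive
  jShriek_additive : jShriek.Additive
  jStar_additive : jStar.Additive
  jLower_additive : jLower.Additive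
  /-- `j_!` is left adjoint to `j^*` -/
  adj₁ : jShriek ⊣ jStar
  /-- `j^*` is left adjoint to `j_*` -/
  adj₂ : jStar ⊣ jLower
  /-- `i^*` is left adjoint to `i_*` -/
  adj₃ : iStar ⊣ iLower
  /-- `i_*` is left adjoint to `i^!` -/
  adj₄ : iLower ⊣ iShriek
  /-- the unit `Id → j^* j_!` is an isomorphism -/
  isIso_adj₁_unit : IsIso adj₁.unit
  /-- the counit `j^* j_* → Id` is an isomorphism -/
  isIso_adj₂_counit : IsIso adj₂.counit
  /-- the counit `i^* i_* → Id` is an isomorphism -/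
  isIso_adj₃_counit : IsIso adj₃.counit
  /-- the unit `Id → i^! i_*` is an isomorphism -/
  isIso_adj₄_unit : IsIso adj₄.unit
  iLower_full : iLower.Full
  iLower_faithful : iLower.Faithful
  /-- `i_*` is an embedding onto the full subcategory of objects killed by `j^*` -/
  essImage_iLower : ∀ (X : A), iLower.essImage X ↔ IsZero (jStar.obj X)

attribute [instance] Recollement.iStar_additive Recollement.iLower_additive
  Recollement.iShriek_additive Recollement.jShriek_additive Recollement.jStar_additive
  Recollement.jLower_additive Recollement.isIso_adj₁_unit Recollement.isIso_adj₂_counit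
  Recollement.isIso_adj₃_counit Recollement.isIso_adj₄_unit
  Recollement.iLower_full Recollement.iLower_faithful

variable {A' : Type u'} {A : Type u} {A'' : Type u''}
    [Category.{v'} A'] [Category.{v} A] [Category.{v''} A'']
    [Abelian A'] [Abelian A] [Abelian A'']

namespace Recollement

/-- The norm `N : j_! ⟶ j_*`, whose component at `X` corresponds to the identity of `X`
under `Hom(j_!X, j_*X) ≅ Hom(X, j^*j_*X) ≅ Hom(X, X)`. -/
noncomputable def norm (R : Recollement A' A A'') : R.jShriek ⟶ R.jLower where
  app X := (R.adj₁.homEquiv X (R.jLower.obj X)).symm (inv (R.adj₂.counit.app X))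
  naturality {X Y} f := by
    have h : f ≫ inv (R.adj₂.counit.app Y) =
        inv (R.adj₂.counit.app X) ≫ R.jStar.map (R.jLower.map f) := by
      rw [← cancel_mono (R.adj₂.counit.app Y)]
      have := R.adj₂.counit.naturality f
      simp only [Functor.comp_map, Functor.id_map] at this
      simp [this]
    rw [← Adjunction.homEquiv_naturality_left_symm, h,
      Adjunction.homEquiv_naturality_right_symm]

/-- The intermediate extension `j_!* := Im (N : j_! → j_*)`. -/
noncomputable def jMid (R : Recollement A' A A'') : A'' ⥤ A where
  obj X := image (R.norm.app X)
  map {X Y} f := image.map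
    ((Arrow.homMk _ _ (R.norm.naturality f) :
      Arrow.mk (R.norm.app X) ⟶ Arrow.mk (R.norm.app Y)))
  map_id X := by
    have : (Arrow.homMk _ _ (R.norm.naturality (𝟙 X)) :
        Arrow.mk (R.norm.app X) ⟶ Arrow.mk (R.norm.app X)) = 𝟙 (Arrow.mk (R.norm.app X)) := by
      ext <;> simp
    rw [this, image.map_id]
    rfl
  map_comp {X Y Z} f g := by
    rw [← image.map_comp]
    congr 1
    ext <;> simp

end Recollement

namespace Recollement

variable (R : Recollement A' A A'')

lemma hom_eq_zero_of_iLower_to_jLower {W : A'} {X : A''}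
    (t : R.iLower.obj W ⟶ R.jLower.obj X) : t = 0 := by
  have hz : IsZero (R.jStar.obj (R.iLower.obj W)) :=
    (R.essImage_iLower _).mp (R.iLower.obj_mem_essImage W)
  have h := hz.eq_of_src ((R.adj₂.homEquiv (R.iLower.obj W) X).symm t) 0
  rw [← (R.adj₂.homEquiv (R.iLower.obj W) X).apply_symm_apply t, h]
  simp [Adjunction.homEquiv_unit]

lemma hom_eq_zero_of_jShriek_to_iLower {X : A''} {W : A'}
    (t : R.jShriek.obj X ⟶ R.iLower.obj W) : t = 0 := by
  have hz : IsZero (R.jStar.obj (R.iLower.obj W)) :=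
    (R.essImage_iLower _).mp (R.iLower.obj_mem_essImage W)
  have h := hz.eq_of_tgt (R.adj₁.homEquiv X (R.iLower.obj W) t) 0
  rw [← (R.adj₁.homEquiv X (R.iLower.obj W)).symm_apply_apply t, h]
  simp [Adjunction.homEquiv_counit]

lemma isZero_iShriek_jLower (X : A'') : IsZero (R.iShriek.obj (R.jLower.obj X)) := by
  rw [IsZero.iff_id_eq_zero]
  have h := R.hom_eq_zero_of_iLower_to_jLower
    ((R.adj₄.homEquiv (R.iShriek.obj (R.jLower.obj X)) (R.jLower.obj X)).symm
      (𝟙 (R.iShriek.obj (R.jLower.obj X))))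
  rw [← (R.adj₄.homEquiv (R.iShriek.obj (R.jLower.obj X)) (R.jLower.obj X)).apply_symm_apply
    (𝟙 (R.iShriek.obj (R.jLower.obj X))), h]
  simp [Adjunction.homEquiv_unit]

lemma isZero_iStar_jShriek (X : A'') : IsZero (R.iStar.obj (R.jShriek.obj X)) := by
  rw [IsZero.iff_id_eq_zero]
  have h := R.hom_eq_zero_of_jShriek_to_iLower
    (R.adj₃.homEquiv (R.jShriek.obj X) (R.iStar.obj (R.jShriek.obj X))
      (𝟙 (R.iStar.obj (R.jShriek.obj X))))
  rw [← (R.adj₃.homEquiv (R.jShriek.obj X) (R.iStar.obj (R.jShriek.obj X))).symm_apply_apply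
    (𝟙 (R.iStar.obj (R.jShriek.obj X))), h]
  simp [Adjunction.homEquiv_counit]

lemma norm_app_eq (X : A'') :
    R.norm.app X = (R.adj₁.homEquiv X (R.jLower.obj X)).symm (inv (R.adj₂.counit.app X)) :=
  rfl

lemma isIso_jStar_map_norm (X : A'') : IsIso (R.jStar.map (R.norm.app X)) := by
  have h : R.adj₁.unit.app X ≫ R.jStar.map (R.norm.app X) = inv (R.adj₂.counit.app X) := by
    have := (R.adj₁.homEquiv X (R.jLower.obj X)).apply_symm_apply (inv (R.adj₂.counit.app X))
    rw [Adjunction.homEquiv_unit] at this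
    rw [← R.norm_app_eq] at this
    exact this
  have : R.jStar.map (R.norm.app X) =
      inv (R.adj₁.unit.app X) ≫ inv (R.adj₂.counit.app X) := by
    rw [← h]; simp
  rw [this]; infer_instance

lemma isIso_of_isIso_iShriek_map {M N : A} (hM : R.iLower.essImage M)
    (hN : R.iLower.essImage N) (f : M ⟶ N) (hf : IsIso (R.iShriek.map f)) :
    IsIso f := by
  obtain ⟨K, ⟨e⟩⟩ := hM
  obtain ⟨L, ⟨e'⟩⟩ := hN
  set m : R.iLower.obj K ⟶ R.iLower.obj L := e.hom ≫ f ≫ e'.inv with hm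
  set g : K ⟶ L := R.iLower.preimage m with hgdef
  have hmg : R.iLower.map g = m := R.iLower.map_preimage m
  haveI h1 : IsIso (R.iShriek.map (R.iLower.map g)) := by
    rw [hmg, hm]
    simp only [Functor.map_comp]
    infer_instance
  have h2 : R.adj₄.unit.app K ≫ R.iShriek.map (R.iLower.map g) = g ≫ R.adj₄.unit.app L := by
    simpa using (R.adj₄.unit.naturality g).symm
  haveI h3 : IsIso (g ≫ R.adj₄.unit.app L) := by rw [← h2]; infer_instance
  haveI h4 : IsIso g := IsIso.of_isIso_comp_right g (R.adj₄.unit.app L)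
  haveI h5 : IsIso m := by rw [← hmg]; infer_instance
  have : f = e.inv ≫ m ≫ e'.hom := by rw [hm]; simp
  rw [this]; infer_instance

lemma isIso_of_isIso_iStar_map {M N : A} (hM : R.iLower.essImage M)
    (hN : R.iLower.essImage N) (f : M ⟶ N) (hf : IsIso (R.iStar.map f)) :
    IsIso f := by
  obtain ⟨K, ⟨e⟩⟩ := hM
  obtain ⟨L, ⟨e'⟩⟩ := hN
  set m : R.iLower.obj K ⟶ R.iLower.obj L := e.hom ≫ f ≫ e'.inv with hm
  set g : K ⟶ L := R.iLower.preimage m with hgdef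
  have hmg : R.iLower.map g = m := R.iLower.map_preimage m
  haveI h1 : IsIso (R.iStar.map (R.iLower.map g)) := by
    rw [hmg, hm]
    simp only [Functor.map_comp]
    infer_instance
  have h2 : R.iStar.map (R.iLower.map g) ≫ R.adj₃.counit.app L = R.adj₃.counit.app K ≫ g := by
    simpa using R.adj₃.counit.naturality g
  haveI h3 : IsIso (R.adj₃.counit.app K ≫ g) := by rw [← h2]; infer_instance
  haveI h4 : IsIso g := IsIso.of_isIso_comp_left (R.adj₃.counit.app K) g
  haveI h5 : IsIso m := by rw [← hmg]; infer_instance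
  have : f = e.inv ≫ m ≫ e'.hom := by rw [hm]; simp
  rw [this]; infer_instance

lemma iLower_essImage_kernel_norm (X : A'') :
    R.iLower.essImage (kernel (R.norm.app X)) := by
  rw [R.essImage_iLower]
  haveI : PreservesLimitsOfSize.{0, 0} R.jStar := R.adj₁.rightAdjoint_preservesLimits
  haveI := R.isIso_jStar_map_norm X
  haveI : Mono (R.jStar.map (R.norm.app X)) := inferInstance
  exact IsZero.of_iso (isZero_zero A'')
    ((PreservesKernel.iso R.jStar (R.norm.app X)) ≪≫ kernel.ofMono (R.jStar.map (R.norm.app X)))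

lemma iLower_essImage_cokernel_norm (X : A'') :
    R.iLower.essImage (cokernel (R.norm.app X)) := by
  rw [R.essImage_iLower]
  haveI : PreservesColimitsOfSize.{0, 0} R.jStar := R.adj₂.leftAdjoint_preservesColimits
  haveI := R.isIso_jStar_map_norm X
  haveI : Epi (R.jStar.map (R.norm.app X)) := inferInstance
  exact IsZero.of_iso (isZero_zero A'')
    ((PreservesCokernel.iso R.jStar (R.norm.app X)) ≪≫
      cokernel.ofEpi (R.jStar.map (R.norm.app X)))

lemma counit_comp_norm_app (X : A'') :
    R.adj₄.counit.app (R.jShriek.obj X) ≫ R.norm.app X = 0 :=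
  R.hom_eq_zero_of_iLower_to_jLower _

lemma norm_app_comp_unit (X : A'') :
    R.norm.app X ≫ R.adj₃.unit.app (R.jLower.obj X) = 0 :=
  R.hom_eq_zero_of_jShriek_to_iLower _

/-- `i_* i^! j_! X → j_! X` is a kernel of the norm. -/
noncomputable def isKernelCounit (X : A'') :
    IsLimit (KernelFork.ofι (R.adj₄.counit.app (R.jShriek.obj X))
      (R.counit_comp_norm_app X)) := by
  haveI : PreservesLimitsOfSize.{0, 0} R.iShriek := R.adj₄.rightAdjoint_preservesLimits
  set N := R.norm.app X with hN
  set φ : R.iLower.obj (R.iShriek.obj (R.jShriek.obj X)) ⟶ kernel N :=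
    kernel.lift N (R.adj₄.counit.app (R.jShriek.obj X)) (R.counit_comp_norm_app X) with hφ
  have hφι : φ ≫ kernel.ι N = R.adj₄.counit.app (R.jShriek.obj X) := kernel.lift_ι _ _ _
  have hNz : R.iShriek.map N = 0 := (R.isZero_iShriek_jLower X).eq_of_tgt _ _
  haveI h1 : IsIso (kernel.ι (R.iShriek.map N)) := by
    refine ⟨⟨kernel.lift _ (𝟙 _) (by rw [hNz]; simp), ?_, by simp⟩⟩
    rw [← cancel_mono (kernel.ι (R.iShriek.map N))]
    simp
  haveI h2 : IsIso (kernelComparison N R.iShriek) := by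
    rw [← PreservesKernel.iso_hom]; infer_instance
  haveI h3 : IsIso (R.iShriek.map (kernel.ι N)) := by
    rw [← kernelComparison_comp_ι N R.iShriek]; infer_instance
  haveI h4 : IsIso (R.iShriek.map (R.adj₄.counit.app (R.jShriek.obj X))) := by
    have ht := R.adj₄.right_triangle_components (R.jShriek.obj X)
    haveI : IsIso (R.adj₄.unit.app (R.iShriek.obj (R.jShriek.obj X)) ≫
        R.iShriek.map (R.adj₄.counit.app (R.jShriek.obj X))) := by
      rw [ht]; exact ⟨⟨𝟙 _, by simp, by simp⟩⟩
    exact IsIso.of_isIso_comp_left (R.adj₄.unit.app _) _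
  haveI h5 : IsIso (R.iShriek.map φ) := by
    have hc : R.iShriek.map φ ≫ R.iShriek.map (kernel.ι N) =
        R.iShriek.map (R.adj₄.counit.app (R.jShriek.obj X)) := by
      rw [← Functor.map_comp, hφι]
    have h6 : R.iShriek.map φ =
        R.iShriek.map (R.adj₄.counit.app (R.jShriek.obj X)) ≫
          inv (R.iShriek.map (kernel.ι N)) := by
      rw [← hc]; simp
    rw [h6]; infer_instance
  haveI hφiso : IsIso φ := R.isIso_of_isIso_iShriek_map (R.iLower.obj_mem_essImage _)
    (R.iLower_essImage_kernel_norm X) φ h5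
  haveI hmono : Mono (R.adj₄.counit.app (R.jShriek.obj X)) := by
    rw [← hφι]; infer_instance
  exact KernelFork.IsLimit.ofι _ _
    (fun {W'} t ht => kernel.lift N t ht ≫ inv φ)
    (fun {W'} t ht => by
      have hinv : inv φ ≫ R.adj₄.counit.app (R.jShriek.obj X) = kernel.ι N := by
        rw [IsIso.inv_comp_eq]; exact hφι.symm
      rw [Category.assoc, hinv, kernel.lift_ι])
    (fun {W'} t ht m hm => by
      have hinv : inv φ ≫ R.adj₄.counit.app (R.jShriek.obj X) = kernel.ι N := by
        rw [IsIso.inv_comp_eq]; exact hφι.symm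
      rw [← cancel_mono (R.adj₄.counit.app (R.jShriek.obj X)), hm,
        Category.assoc, hinv, kernel.lift_ι])

/-- `j_* X → i_* i^* j_* X` is a cokernel of the norm. -/
noncomputable def isCokernelUnit (X : A'') :
    IsColimit (CokernelCofork.ofπ (R.adj₃.unit.app (R.jLower.obj X))
      (R.norm_app_comp_unit X)) := by
  haveI : PreservesColimitsOfSize.{0, 0} R.iStar := R.adj₃.leftAdjoint_preservesColimits
  set N := R.norm.app X with hN
  set φ : cokernel N ⟶ R.iLower.obj (R.iStar.obj (R.jLower.obj X)) :=
    cokernel.desc N (R.adj₃.unit.app (R.jLower.obj X)) (R.norm_app_comp_unit X) with hφ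
  have hφπ : cokernel.π N ≫ φ = R.adj₃.unit.app (R.jLower.obj X) := cokernel.π_desc _ _ _
  have hNz : R.iStar.map N = 0 := (R.isZero_iStar_jShriek X).eq_of_src _ _
  haveI h1 : IsIso (cokernel.π (R.iStar.map N)) := by
    refine ⟨⟨cokernel.desc _ (𝟙 _) (by rw [hNz]; simp), by simp, ?_⟩⟩
    rw [← cancel_epi (cokernel.π (R.iStar.map N))]
    simp
  haveI h2 : IsIso (cokernelComparison N R.iStar) := by
    rw [← PreservesCokernel.iso_inv]; infer_instance
  haveI h3 : IsIso (R.iStar.map (cokernel.π N)) := by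
    rw [← π_comp_cokernelComparison N R.iStar]; infer_instance
  haveI h4 : IsIso (R.iStar.map (R.adj₃.unit.app (R.jLower.obj X))) := by
    have ht := R.adj₃.left_triangle_components (R.jLower.obj X)
    haveI : IsIso (R.iStar.map (R.adj₃.unit.app (R.jLower.obj X)) ≫
        R.adj₃.counit.app (R.iStar.obj (R.jLower.obj X))) := by
      rw [ht]; exact ⟨⟨𝟙 _, by simp, by simp⟩⟩
    exact IsIso.of_isIso_comp_right _ (R.adj₃.counit.app _)
  haveI h5 : IsIso (R.iStar.map φ) := by
    have hc : R.iStar.map (cokernel.π N) ≫ R.iStar.map φ =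
        R.iStar.map (R.adj₃.unit.app (R.jLower.obj X)) := by
      rw [← Functor.map_comp, hφπ]
    have h6 : R.iStar.map φ =
        inv (R.iStar.map (cokernel.π N)) ≫
          R.iStar.map (R.adj₃.unit.app (R.jLower.obj X)) := by
      rw [← hc]; simp
    rw [h6]; infer_instance
  haveI hφiso : IsIso φ := R.isIso_of_isIso_iStar_map (R.iLower_essImage_cokernel_norm X)
    (R.iLower.obj_mem_essImage _) φ h5
  haveI hepi : Epi (R.adj₃.unit.app (R.jLower.obj X)) := by
    rw [← hφπ]; infer_instance
  exact CokernelCofork.IsColimit.ofπ _ _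
    (fun {Z'} t ht => inv φ ≫ cokernel.desc N t ht)
    (fun {Z'} t ht => by
      have hinv : R.adj₃.unit.app (R.jLower.obj X) ≫ inv φ = cokernel.π N := by
        rw [IsIso.comp_inv_eq]; exact hφπ.symm
      rw [← Category.assoc, hinv, cokernel.π_desc])
    (fun {Z'} t ht m hm => by
      have hinv : R.adj₃.unit.app (R.jLower.obj X) ≫ inv φ = cokernel.π N := by
        rw [IsIso.comp_inv_eq]; exact hφπ.symm
      rw [← cancel_epi (R.adj₃.unit.app (R.jLower.obj X)), hm, ← Category.assoc, hinv,
        cokernel.π_desc])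

end Recollement

/-- For every short exact sequence `0 → X → Y → Z → 0` in `A''` there is an exact
sequence `i^!j_!X → i^!j_!Y → i^!j_!Z → i^*j_*X → i^*j_*Y → i^*j_*Z` in `A'`. -/
theorem recollement_snake_six_term_exact (R : Recollement A' A A'')
    (S : ShortComplex A'') (hS : S.ShortExact) :
    ∃ (δ : (R.jShriek ⋙ R.iShriek).obj S.X₃ ⟶ (R.jLower ⋙ R.iStar).obj S.X₁)
      (w₁ : (R.jShriek ⋙ R.iShriek).map S.f ≫ (R.jShriek ⋙ R.iShriek).map S.g = 0)
      (w₂ : (R.jShriek ⋙ R.iShriek).map S.g ≫ δ = 0)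
      (w₃ : δ ≫ (R.jLower ⋙ R.iStar).map S.f = 0)
      (w₄ : (R.jLower ⋙ R.iStar).map S.f ≫ (R.jLower ⋙ R.iStar).map S.g = 0),
      (ShortComplex.mk _ _ w₁).Exact ∧ (ShortComplex.mk _ _ w₂).Exact ∧
      (ShortComplex.mk _ _ w₃).Exact ∧ (ShortComplex.mk _ _ w₄).Exact := by
  classical
  haveI : PreservesColimitsOfSize.{0, 0} R.jShriek := R.adj₁.leftAdjoint_preservesColimits
  haveI : PreservesLimitsOfSize.{0, 0} R.jLower := R.adj₂.rightAdjoint_preservesLimits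
  haveI : PreservesLimitsOfSize.{0, 0} R.iLower := R.adj₃.rightAdjoint_preservesLimits
  haveI : PreservesColimitsOfSize.{0, 0} R.iLower := R.adj₄.leftAdjoint_preservesColimits
  haveI : R.iLower.PreservesHomology := {}
  haveI : R.jShriek.IsLeftAdjoint := ⟨_, ⟨R.adj₁⟩⟩
  haveI : R.jLower.IsRightAdjoint := ⟨_, ⟨R.adj₂⟩⟩
  haveI := hS.mono_f
  haveI := hS.epi_g
  let v₀₁ : S.map ((R.jShriek ⋙ R.iShriek) ⋙ R.iLower) ⟶ S.map R.jShriek :=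
    { τ₁ := R.adj₄.counit.app (R.jShriek.obj S.X₁)
      τ₂ := R.adj₄.counit.app (R.jShriek.obj S.X₂)
      τ₃ := R.adj₄.counit.app (R.jShriek.obj S.X₃)
      comm₁₂ := by exact (R.adj₄.counit.naturality (R.jShriek.map S.f)).symm
      comm₂₃ := by exact (R.adj₄.counit.naturality (R.jShriek.map S.g)).symm }
  let v₂₃ : S.map R.jLower ⟶ S.map ((R.jLower ⋙ R.iStar) ⋙ R.iLower) :=
    { τ₁ := R.adj₃.unit.app (R.jLower.obj S.X₁)
      τ₂ := R.adj₃.unit.app (R.jLower.obj S.X₂)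
      τ₃ := R.adj₃.unit.app (R.jLower.obj S.X₃)
      comm₁₂ := by exact (R.adj₃.unit.naturality (R.jLower.map S.f)).symm
      comm₂₃ := by exact (R.adj₃.unit.naturality (R.jLower.map S.g)).symm }
  have hw02 : v₀₁ ≫ S.mapNatTrans R.norm = 0 := by
    ext
    · exact R.counit_comp_norm_app S.X₁
    · exact R.counit_comp_norm_app S.X₂
    · exact R.counit_comp_norm_app S.X₃
  have hw13 : S.mapNatTrans R.norm ≫ v₂₃ = 0 := by
    ext
    · exact R.norm_app_comp_unit S.X₁
    · exact R.norm_app_comp_unit S.X₂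
    · exact R.norm_app_comp_unit S.X₃
  let D : ShortComplex.SnakeInput A :=
    { L₀ := S.map ((R.jShriek ⋙ R.iShriek) ⋙ R.iLower)
      L₁ := S.map R.jShriek
      L₂ := S.map R.jLower
      L₃ := S.map ((R.jLower ⋙ R.iStar) ⋙ R.iLower)
      v₀₁ := v₀₁
      v₁₂ := S.mapNatTrans R.norm
      v₂₃ := v₂₃
      w₀₂ := hw02
      w₁₃ := hw13
      h₀ := ShortComplex.isLimitOfIsLimitπ _
        ((isLimitMapConeForkEquiv' ShortComplex.π₁ hw02).symm (R.isKernelCounit S.X₁))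
        ((isLimitMapConeForkEquiv' ShortComplex.π₂ hw02).symm (R.isKernelCounit S.X₂))
        ((isLimitMapConeForkEquiv' ShortComplex.π₃ hw02).symm (R.isKernelCounit S.X₃))
      h₃ := ShortComplex.isColimitOfIsColimitπ _
        ((isColimitMapCoconeCoforkEquiv' ShortComplex.π₁ hw13).symm (R.isCokernelUnit S.X₁))
        ((isColimitMapCoconeCoforkEquiv' ShortComplex.π₂ hw13).symm (R.isCokernelUnit S.X₂))
        ((isColimitMapCoconeCoforkEquiv' ShortComplex.π₃ hw13).symm (R.isCokernelUnit S.X₃))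
      L₁_exact := hS.exact.map_of_epi_of_preservesCokernel R.jShriek hS.epi_g inferInstance
      epi_L₁_g := by
        have : Epi (R.jShriek.map S.g) := inferInstance
        exact this
      L₂_exact := hS.exact.map_of_mono_of_preservesKernel R.jLower hS.mono_f inferInstance
      mono_L₂_f := by
        have : Mono (R.jLower.map S.f) := inferInstance
        exact this }
  -- transfer to A'
  have hexact : ∀ (T : ShortComplex A'), (T.map R.iLower).Exact → T.Exact := fun T h =>
    (T.exact_map_iff_of_faithful R.iLower).mp h
  let K := R.jShriek ⋙ R.iShriek
  let Cc := R.jLower ⋙ R.iStar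
  let δ' : K.obj S.X₃ ⟶ Cc.obj S.X₁ := R.iLower.preimage
    (show R.iLower.obj (K.obj S.X₃) ⟶ R.iLower.obj (Cc.obj S.X₁) from D.δ)
  have hδ : R.iLower.map δ' = D.δ := R.iLower.map_preimage _
  have w₁ : K.map S.f ≫ K.map S.g = 0 := by
    rw [← Functor.map_comp, S.zero, Functor.map_zero]
  have w₂ : K.map S.g ≫ δ' = 0 := R.iLower.map_injective (by
    rw [Functor.map_comp, hδ, Functor.map_zero]
    exact D.L₀_g_δ)
  have w₃ : δ' ≫ Cc.map S.f = 0 := R.iLower.map_injective (by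
    rw [Functor.map_comp, hδ, Functor.map_zero]
    exact D.δ_L₃_f)
  have w₄ : Cc.map S.f ≫ Cc.map S.g = 0 := by
    rw [← Functor.map_comp, S.zero, Functor.map_zero]
  refine ⟨δ', w₁, w₂, w₃, w₄, ?_, ?_, ?_, ?_⟩
  · exact hexact _ D.L₀_exact
  · refine hexact _ ?_
    have e : (ShortComplex.mk _ _ w₂).map R.iLower ≅ D.L₁' :=
      ShortComplex.isoMk (Iso.refl _) (Iso.refl _) (Iso.refl _)
        (by simp only [Iso.refl_hom, Category.id_comp, Category.comp_id]; exact (Category.id_comp _).trans (Category.comp_id _).symm)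
        (by simp only [Iso.refl_hom, Category.id_comp, Category.comp_id]; exact (Category.id_comp _).trans (hδ.symm.trans (Category.comp_id _).symm))
    exact ShortComplex.exact_of_iso e.symm D.L₁'_exact
  · refine hexact _ ?_
    have e : (ShortComplex.mk _ _ w₃).map R.iLower ≅ D.L₂' :=
      ShortComplex.isoMk (Iso.refl _) (Iso.refl _) (Iso.refl _)
        (by simp only [Iso.refl_hom, Category.id_comp, Category.comp_id]; exact (Category.id_comp _).trans (hδ.symm.trans (Category.comp_id _).symm))
        (by simp only [Iso.refl_hom, Category.id_comp, Category.comp_id]; exact (Category.id_comp _).trans (Category.comp_id _).symm)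
    exact ShortComplex.exact_of_iso e.symm D.L₂'_exact
  · exact hexact _ D.L₃_exact
end

section
/- In a recollement situation with enough injectives, the functor sending A to (j*A, i^!Ker ε_A, i^!Ker ε_A → i^!j_!j*A) is an equivalence from the full subcategory Ker i* = {A ∈ A : i*A = 0} to the category M(i^!j_!) of triples (X, V, α) with α: V → i^!j_!X a monomorphism. -/
open CategoryTheory Limits

universe v u v' u' v'' u''

variable {A' : Type u'} {A : Type u} {A'' : Type u''}
    [Category.{v'} A'] [Category.{v} A] [Category.{v''} A'']
    [Abelian A'] [Abelian A] [Abelian A'']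

namespace Recollement

/-- The functor from `Ker i^*` to the category of triples `(X, V, α : V → i^!j_! X)`
(the comma category of `𝟭 A'` over `i^!j_!`), sending `A` to
`(j^*A, i^! Ker ε_A, i^!(Ker ε_A → j_!j^*A))` where `ε` is the counit of `(j_!, j^*)`. -/
noncomputable def kerIStarToComma (R : Recollement A' A A'') :
    ObjectProperty.FullSubcategory (fun X : A => IsZero (R.iStar.obj X)) ⥤
      Comma (𝟭 A') (R.jShriek ⋙ R.iShriek) where
  obj X :=
    { left := R.iShriek.obj (kernel (R.adj₁.counit.app X.obj))
      right := R.jStar.obj X.obj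
      hom := R.iShriek.map (kernel.ι (R.adj₁.counit.app X.obj)) }
  map {X Y} m :=
    { left := R.iShriek.map (kernel.map (R.adj₁.counit.app X.obj) (R.adj₁.counit.app Y.obj)
        (R.jShriek.map (R.jStar.map m.hom)) m.hom (by exact (R.adj₁.counit.naturality m.hom).symm))
      right := R.jStar.map m.hom
      w := by
        dsimp
        rw [← Functor.map_comp, ← Functor.map_comp]
        congr 1
        simp }
  map_id X := by
    apply CommaMorphism.ext
    · dsimp
      rw [← R.iShriek.map_id]
      congr 1
      ext
      simp
    · exact R.jStar.map_id X.obj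
  map_comp {X Y Z} f g := by
    apply CommaMorphism.ext
    · dsimp
      rw [← Functor.map_comp]
      congr 1
      ext
      simp
    · exact R.jStar.map_comp f.hom g.hom

end Recollement


namespace Recollement

variable (R : Recollement A' A A'')

lemma isZero_jStar_iLower (W : A') : IsZero (R.jStar.obj (R.iLower.obj W)) :=
  (R.essImage_iLower _).mp (Functor.obj_mem_essImage _ W)

lemma isZero_of_isZero_jStar_of_isZero_iShriek {K : A} (h1 : IsZero (R.jStar.obj K))
    (h2 : IsZero (R.iShriek.obj K)) : IsZero K := by
  obtain ⟨W, ⟨e⟩⟩ := (R.essImage_iLower K).mpr h1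
  have hW : IsZero (R.iShriek.obj (R.iLower.obj W)) := h2.of_iso (R.iShriek.mapIso e)
  have hW' : IsZero W := hW.of_iso (asIso (R.adj₄.unit.app W))
  exact (R.iLower.map_isZero hW').of_iso e.symm

lemma isZero_of_isZero_jStar_of_isZero_iStar {K : A} (h1 : IsZero (R.jStar.obj K))
    (h2 : IsZero (R.iStar.obj K)) : IsZero K := by
  obtain ⟨W, ⟨e⟩⟩ := (R.essImage_iLower K).mpr h1
  have hW : IsZero (R.iStar.obj (R.iLower.obj W)) := h2.of_iso (R.iStar.mapIso e)
  have hW' : IsZero W := hW.of_iso (asIso (R.adj₃.counit.app W)).symm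
  exact (R.iLower.map_isZero hW').of_iso e.symm

lemma jStar_counit₁_eq (X : A) :
    R.jStar.map (R.adj₁.counit.app X) = inv (R.adj₁.unit.app (R.jStar.obj X)) :=
  (IsIso.inv_eq_of_hom_inv_id (R.adj₁.right_triangle_components X)).symm

lemma isIso_jStar_counit₁ (X : A) : IsIso (R.jStar.map (R.adj₁.counit.app X)) := by
  rw [R.jStar_counit₁_eq]
  infer_instance

lemma isIso_iShriek_counit₄ (Y : A) : IsIso (R.iShriek.map (R.adj₄.counit.app Y)) := by
  rw [(IsIso.inv_eq_of_hom_inv_id (R.adj₄.right_triangle_components Y)).symm]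
  infer_instance

lemma isZero_jStar_kernel_counit₁ (X : A) :
    IsZero (R.jStar.obj (kernel (R.adj₁.counit.app X))) := by
  haveI := R.adj₁.rightAdjoint_preservesLimits
  haveI : PreservesLimitsOfSize.{0, 0} R.jStar := preservesLimitsOfSize_shrink _
  haveI := R.isIso_jStar_counit₁ X
  have hz : IsZero (kernel (R.jStar.map (R.adj₁.counit.app X))) :=
    IsZero.of_mono_eq_zero _ (kernel.ι_of_mono _)
  exact hz.of_iso (asIso (kernelComparison _ R.jStar))

lemma epi_counit₁ {X : A} (hX : IsZero (R.iStar.obj X)) : Epi (R.adj₁.counit.app X) := by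
  haveI := R.adj₂.leftAdjoint_preservesColimits
  haveI : PreservesColimitsOfSize.{0, 0} R.jStar := preservesColimitsOfSize_shrink _
  haveI := R.adj₃.leftAdjoint_preservesColimits
  haveI : PreservesColimitsOfSize.{0, 0} R.iStar := preservesColimitsOfSize_shrink _
  haveI := R.isIso_jStar_counit₁ X
  have h2 : IsZero (R.jStar.obj (cokernel (R.adj₁.counit.app X))) := by
    have hz : IsZero (cokernel (R.jStar.map (R.adj₁.counit.app X))) :=
      IsZero.of_epi_eq_zero _ (cokernel.π_of_epi _)
    exact hz.of_iso (asIso (cokernelComparison _ R.jStar)).symm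
  have h3 : IsZero (R.iStar.obj (cokernel (R.adj₁.counit.app X))) := by
    have hz : IsZero (cokernel (R.iStar.map (R.adj₁.counit.app X))) :=
      IsZero.of_epi (cokernel.π _) hX
    exact hz.of_iso (asIso (cokernelComparison _ R.iStar)).symm
  have hC : IsZero (cokernel (R.adj₁.counit.app X)) :=
    R.isZero_of_isZero_jStar_of_isZero_iStar h2 h3
  exact Abelian.epi_of_cokernel_π_eq_zero _ (hC.eq_zero_of_tgt _)

lemma mono_counit₄ (Y : A) : Mono (R.adj₄.counit.app Y) := by
  haveI := R.adj₁.rightAdjoint_preservesLimits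
  haveI : PreservesLimitsOfSize.{0, 0} R.jStar := preservesLimitsOfSize_shrink _
  haveI := R.adj₄.rightAdjoint_preservesLimits
  haveI : PreservesLimitsOfSize.{0, 0} R.iShriek := preservesLimitsOfSize_shrink _
  have h1 : IsZero (R.jStar.obj (kernel (R.adj₄.counit.app Y))) := by
    haveI : Mono (R.jStar.map (kernel.ι (R.adj₄.counit.app Y))) := R.jStar.map_mono _
    exact IsZero.of_mono (R.jStar.map (kernel.ι (R.adj₄.counit.app Y)))
      (R.isZero_jStar_iLower _)
  have h2 : IsZero (R.iShriek.obj (kernel (R.adj₄.counit.app Y))) := by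
    haveI := R.isIso_iShriek_counit₄ Y
    have hz : IsZero (kernel (R.iShriek.map (R.adj₄.counit.app Y))) :=
      IsZero.of_mono_eq_zero _ (kernel.ι_of_mono _)
    exact hz.of_iso (asIso (kernelComparison _ R.iShriek))
  have hK : IsZero (kernel (R.adj₄.counit.app Y)) :=
    R.isZero_of_isZero_jStar_of_isZero_iShriek h1 h2
  exact Abelian.mono_of_kernel_ι_eq_zero _ (hK.eq_zero_of_src _)

lemma hom_ext_iShriek {K Z : A} (hK : IsZero (R.jStar.obj K)) {f g : K ⟶ Z}
    (h : R.iShriek.map f = R.iShriek.map g) : f = g := by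
  obtain ⟨W, ⟨e⟩⟩ := (R.essImage_iLower K).mpr hK
  rw [← cancel_epi e.hom]
  apply (R.adj₄.homEquiv W Z).injective
  rw [Adjunction.homEquiv_naturality_right, Adjunction.homEquiv_naturality_right, h]

lemma counit₁_naturality {X Y : A} (u : X ⟶ Y) :
    R.jShriek.map (R.jStar.map u) ≫ R.adj₁.counit.app Y = R.adj₁.counit.app X ≫ u := by
  simpa using R.adj₁.counit.naturality u

lemma unit₁_naturality {X Y : A''} (u : X ⟶ Y) :
    R.adj₁.unit.app X ≫ R.jStar.map (R.jShriek.map u) = u ≫ R.adj₁.unit.app Y := by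
  simpa using (R.adj₁.unit.naturality u).symm

lemma mono_hom (X : ObjectProperty.FullSubcategory (fun X : A => IsZero (R.iStar.obj X))) :
    Mono ((R.kerIStarToComma).obj X).hom := by
  haveI := R.adj₄.rightAdjoint_preservesLimits
  haveI : PreservesLimitsOfSize.{0, 0} R.iShriek := preservesLimitsOfSize_shrink _
  exact R.iShriek.map_mono _

lemma faithful_kerIStarToComma : R.kerIStarToComma.Faithful := by
  constructor
  intro X Y f g h
  have hr : R.jStar.map f.hom = R.jStar.map g.hom :=
    congrArg CommaMorphism.right h
  haveI := R.epi_counit₁ X.property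
  have : R.adj₁.counit.app X.obj ≫ f.hom
      = R.adj₁.counit.app X.obj ≫ g.hom := by
    rw [← R.counit₁_naturality, ← R.counit₁_naturality, hr]
  have goal : f.hom = g.hom := (cancel_epi (R.adj₁.counit.app X.obj)).mp this
  ext
  exact goal

lemma full_kerIStarToComma : R.kerIStarToComma.Full := by
  constructor
  intro X Y m
  haveI := R.epi_counit₁ X.property
  have hw : (m.left : _) ≫ R.iShriek.map (kernel.ι (R.adj₁.counit.app Y.obj)) =
      R.iShriek.map (kernel.ι (R.adj₁.counit.app X.obj)) ≫
        R.iShriek.map (R.jShriek.map m.right) := by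
    simpa [kerIStarToComma] using m.w
  have h0 : kernel.ι (R.adj₁.counit.app X.obj) ≫
      (R.jShriek.map m.right ≫ R.adj₁.counit.app Y.obj) = 0 := by
    apply R.hom_ext_iShriek (R.isZero_jStar_kernel_counit₁ X.obj)
    erw [Functor.map_comp, Functor.map_comp, Functor.map_zero, ← Category.assoc, ← hw,
      Category.assoc, ← Functor.map_comp, kernel.condition, Functor.map_zero, comp_zero]
  refine ⟨ObjectProperty.homMk (Abelian.epiDesc (R.adj₁.counit.app X.obj) _ h0), ?_⟩
  have hf : R.adj₁.counit.app X.obj ≫ Abelian.epiDesc (R.adj₁.counit.app X.obj) _ h0 =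
      R.jShriek.map m.right ≫ R.adj₁.counit.app Y.obj := Abelian.comp_epiDesc _ _ _
  set f := Abelian.epiDesc (R.adj₁.counit.app X.obj) _ h0 with hfdef
  have hr : R.jStar.map f = m.right := by
    haveI := R.isIso_jStar_counit₁ X.obj
    erw [← cancel_epi (R.jStar.map (R.adj₁.counit.app X.obj)), ← Functor.map_comp, hf,
      Functor.map_comp, R.jStar_counit₁_eq, R.jStar_counit₁_eq, IsIso.comp_inv_eq,
      Category.assoc, IsIso.eq_inv_comp]
    exact R.unit₁_naturality m.right
  apply CommaMorphism.ext
  · show R.iShriek.map (kernel.map _ _ _ _ _) = m.left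
    haveI := R.adj₄.rightAdjoint_preservesLimits
    haveI : PreservesLimitsOfSize.{0, 0} R.iShriek := preservesLimitsOfSize_shrink _
    haveI : Mono (R.iShriek.map (kernel.ι (R.adj₁.counit.app Y.obj))) := R.iShriek.map_mono _
    erw [← cancel_mono (R.iShriek.map (kernel.ι (R.adj₁.counit.app Y.obj)))]
    erw [← Functor.map_comp, kernel.lift_ι, Functor.map_comp, hr, ← hw]
    rfl
  · exact hr

lemma essSurj_lift (h : ∀ X, Mono ((R.kerIStarToComma).obj X).hom) :
    (ObjectProperty.lift (fun o : Comma (𝟭 A') (R.jShriek ⋙ R.iShriek) => Mono o.hom)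
      R.kerIStarToComma h).EssSurj := by
  haveI := R.adj₁.rightAdjoint_preservesLimits
  haveI : PreservesLimitsOfSize.{0, 0} R.jStar := preservesLimitsOfSize_shrink _
  haveI := R.adj₂.leftAdjoint_preservesColimits
  haveI : PreservesColimitsOfSize.{0, 0} R.jStar := preservesColimitsOfSize_shrink _
  haveI := R.adj₃.leftAdjoint_preservesColimits
  haveI : PreservesColimitsOfSize.{0, 0} R.iStar := preservesColimitsOfSize_shrink _
  haveI := R.adj₃.rightAdjoint_preservesLimits
  haveI : PreservesLimitsOfSize.{0, 0} R.iLower := preservesLimitsOfSize_shrink _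
  constructor
  intro o
  haveI hα : Mono o.obj.hom := o.property
  set V := o.obj.left with hV
  set X := o.obj.right with hX
  -- the map `i_* V ⟶ j_! X` corresponding to `α` under the adjunction
  set abar : R.iLower.obj V ⟶ R.jShriek.obj X :=
    R.iLower.map o.obj.hom ≫ R.adj₄.counit.app _ with habar
  haveI : Mono abar := by
    haveI := R.mono_counit₄ (R.jShriek.obj X)
    haveI : Mono (R.iLower.map o.obj.hom) := R.iLower.map_mono _
    exact mono_comp _ _
  set A₀ := cokernel abar with hA₀def
  set π := cokernel.π abar with hπ
  have hA₀ : IsZero (R.iStar.obj A₀) := by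
    have hz : IsZero (cokernel (R.iStar.map abar)) :=
      IsZero.of_epi (cokernel.π _) (R.isZero_iStar_jShriek _)
    exact hz.of_iso (asIso (cokernelComparison _ R.iStar)).symm
  -- the isomorphism `X ≅ j^* A₀`
  set t : X ⟶ R.jStar.obj A₀ := R.adj₁.unit.app _ ≫ R.jStar.map π with ht
  -- `abar` is the kernel of `π`
  have hl := Abelian.monoIsKernelOfCokernel _ (cokernelIsCokernel abar)
  set e : kernel π ≅ R.iLower.obj V :=
    IsLimit.conePointUniqueUpToIso (kernelIsKernel π) hl with he
  have he' : e.hom ≫ abar = kernel.ι π := by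
    have := IsLimit.conePointUniqueUpToIso_hom_comp (kernelIsKernel π) hl
      WalkingParallelPair.zero
    simpa [he] using this
  have hkermono : Mono (R.jStar.map π) := by
    apply Abelian.mono_of_kernel_ι_eq_zero
    have hk : IsZero (R.jStar.obj (kernel π)) :=
      (R.isZero_jStar_iLower V).of_iso (R.jStar.mapIso e)
    have : IsZero (kernel (R.jStar.map π)) :=
      hk.of_iso (asIso (kernelComparison _ R.jStar)).symm
    exact this.eq_zero_of_src _
  haveI : Epi (R.jStar.map π) := R.jStar.map_epi _
  haveI : Mono (R.jStar.map π) := hkermono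
  haveI : IsIso (R.jStar.map π) := isIso_of_mono_of_epi _
  haveI hiso_t : IsIso t := by rw [ht]; infer_instance
  haveI : IsIso (R.jShriek.map t) := inferInstance
  -- `j_! t ≫ ε_{A₀} = π`
  have hkey : R.jShriek.map t ≫ R.adj₁.counit.app A₀ = π := by
    rw [ht, Functor.map_comp, Category.assoc, R.counit₁_naturality,
      ← Category.assoc, R.adj₁.left_triangle_components, Category.id_comp]
  have hkey' : R.adj₁.counit.app A₀ ≫ (Iso.refl A₀).hom =
      (asIso (R.jShriek.map t)).symm.hom ≫ π := by
    simp only [Iso.refl_hom, Category.comp_id, asIso]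
    rw [Iso.symm_hom, ← hkey]
    simp
  set κ₁ : kernel (R.adj₁.counit.app A₀) ≅ kernel π :=
    kernel.mapIso _ π (asIso (R.jShriek.map t)).symm (Iso.refl A₀) hkey' with hκ₁
  have hκ₁' : κ₁.hom ≫ kernel.ι π = kernel.ι (R.adj₁.counit.app A₀) ≫ inv (R.jShriek.map t) := by
    rw [hκ₁]
    simpa [kernel.mapIso] using kernel.lift_ι _ _ _
  set leftIso : R.iShriek.obj (kernel (R.adj₁.counit.app A₀)) ≅ V :=
    R.iShriek.mapIso (κ₁ ≪≫ e) ≪≫ (asIso (R.adj₄.unit.app V)).symm with hleft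
  -- `α = η_V ≫ i^! abar`
  have hαeq : R.adj₄.unit.app V ≫ R.iShriek.map abar = o.obj.hom := by
    have : abar = (R.adj₄.homEquiv V (R.jShriek.obj X)).symm o.obj.hom := by
      rw [Adjunction.homEquiv_counit]
    have h2 := congrArg (R.adj₄.homEquiv V (R.jShriek.obj X)) this
    rw [Equiv.apply_symm_apply] at h2
    rw [← h2, Adjunction.homEquiv_unit]
  -- the underlying A-level identity
  have hA : κ₁.hom ≫ e.hom ≫ abar =
      kernel.ι (R.adj₁.counit.app A₀) ≫ R.jShriek.map (inv t) := by
    rw [he', hκ₁', Functor.map_inv]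
  have hw : (𝟭 A').map leftIso.hom ≫ o.obj.hom =
      (R.kerIStarToComma.obj ⟨A₀, hA₀⟩).hom ≫
        (R.jShriek ⋙ R.iShriek).map (asIso t).symm.hom := by
    show leftIso.hom ≫ o.obj.hom =
      R.iShriek.map (kernel.ι (R.adj₁.counit.app A₀)) ≫ R.iShriek.map (R.jShriek.map (inv t))
    rw [hleft]
    simp only [Iso.trans_hom, Functor.mapIso_hom, Iso.symm_hom, asIso_inv, Category.assoc]
    have : inv (R.adj₄.unit.app V) ≫ o.obj.hom = R.iShriek.map abar := by
      rw [IsIso.inv_comp_eq, hαeq]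
    rw [this, ← Functor.map_comp, ← Functor.map_comp, Category.assoc, hA]
  refine ⟨⟨A₀, hA₀⟩, ⟨(ObjectProperty.ι _).preimageIso ?_⟩⟩
  exact Comma.isoMk leftIso (asIso t).symm hw

end Recollement

/-- With enough injectives, `A ↦ (j^*A, i^! Ker ε_A, i^! Ker ε_A → i^!j_!j^*A)` is an
equivalence from `Ker i^*` to the category `M(i^!j_!)` of triples
`(X, V, α : V ↪ i^!j_!X)` with `α` a monomorphism. -/
theorem recollement_kerIStar_equivalence (R : Recollement A' A A'')
    [EnoughInjectives A] :
    ∃ h : ∀ X, Mono ((R.kerIStarToComma).obj X).hom,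
      (ObjectProperty.lift (fun o : Comma (𝟭 A') (R.jShriek ⋙ R.iShriek) => Mono o.hom)
        R.kerIStarToComma h).IsEquivalence := by
  refine ⟨R.mono_hom, ?_⟩
  haveI := R.faithful_kerIStarToComma
  haveI := R.full_kerIStarToComma
  haveI := R.essSurj_lift R.mono_hom
  exact {}
end
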